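/- Let B > σ > 0 with 0 < B − σ < 1 < B + σ. If f : (0,∞) → [0,∞) is Lebesgue measurable and f(w)·f(rw) = 0 for almost every pair (r,w) ∈ [B−σ, B+σ] × (0,∞) with respect to two-dimensional Lebesgue measure, then f = 0 almost everywhere on (0,∞). -/
import Mathlib


open Set MeasureTheory

/-- Only the trivial steady state when the feeding interval contains the ratio 1:
if `0 < B − σ < 1 < B + σ` and a measurable nonnegative `f : (0,∞) → [0,∞)` satisfies
`f(w)·f(rw) = 0` for a.e. `(r,w) ∈ [B−σ, B+σ] × (0,∞)` (two-dimensional Lebesgue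
measure), then `f = 0` a.e. on `(0,∞)`. -/
theorem trivial_steady_state (B σ : ℝ) (hσ : 0 < σ) (hσB : σ < B)
    (h1 : B - σ < 1) (h2 : 1 < B + σ)
    (f : ℝ → ℝ) (hf : Measurable f) (hnn : ∀ w, 0 < w → 0 ≤ f w)
    (hcond : ∀ᵐ p : ℝ × ℝ ∂(volume.restrict ((Icc (B - σ) (B + σ)) ×ˢ (Ioi 0))),
      f p.2 * f (p.1 * p.2) = 0) :
    ∀ᵐ w ∂(volume.restrict (Ioi (0 : ℝ))), f w = 0 := by
  set a := B - σ with ha'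
  set b := B + σ with hb'
  have ha0 : 0 < a := by simp only [ha']; linarith
  -- rewrite the condition over the product of restricted measures
  have hcond2 : ∀ᵐ p : ℝ × ℝ ∂((volume.restrict (Icc a b)).prod (volume.restrict (Ioi 0))),
      f p.2 * f (p.1 * p.2) = 0 := by
    rw [Measure.prod_restrict, ← Measure.volume_eq_prod]
    exact hcond
  -- swap the coordinates
  have hmeas_set : MeasurableSet {p : ℝ × ℝ | f p.1 * f (p.2 * p.1) = 0} := by
    have : Measurable fun p : ℝ × ℝ => f p.1 * f (p.2 * p.1) :=
      (hf.comp measurable_fst).mul (hf.comp (measurable_snd.mul measurable_fst))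
    exact this (measurableSet_singleton 0)
  have hswap : ∀ᵐ p : ℝ × ℝ ∂((volume.restrict (Ioi (0:ℝ))).prod (volume.restrict (Icc a b))),
      f p.1 * f (p.2 * p.1) = 0 := by
    rw [← Measure.prod_swap, ae_map_iff measurable_swap.aemeasurable hmeas_set]
    exact hcond2
  have h3 : ∀ᵐ w ∂(volume.restrict (Ioi (0:ℝ))),
      ∀ᵐ r ∂(volume.restrict (Icc a b)), f w * f (r * w) = 0 :=
    Measure.ae_ae_of_ae_prod hswap
  -- the "bad" set
  set S : Set ℝ := {w | f w ≠ 0} ∩ Ioi 0 with hS'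
  have hSmeas : MeasurableSet S :=
    ((hf (measurableSet_singleton 0)).compl).inter measurableSet_Ioi
  -- it suffices to show S is null
  have hgoal : volume S = 0 → ∀ᵐ w ∂(volume.restrict (Ioi (0:ℝ))), f w = 0 := by
    intro h0
    rw [ae_iff, Measure.restrict_apply (by exact (hf (measurableSet_singleton 0)).compl)]
    exact h0
  refine hgoal ?_
  by_contra hpos
  -- density theorem
  have hden := Besicovitch.ae_tendsto_measure_inter_div (volume : Measure ℝ) S
  have h3' : ∀ᵐ w ∂(volume.restrict S),
      ∀ᵐ r ∂(volume.restrict (Icc a b)), f w * f (r * w) = 0 :=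
    ae_restrict_of_ae_restrict_of_subset inter_subset_right h3
  have hmem : ∀ᵐ w ∂(volume.restrict S), w ∈ S := ae_restrict_mem hSmeas
  have hne : (volume.restrict S) ≠ 0 := by
    intro h0
    apply hpos
    rw [← Measure.restrict_apply_univ, h0]
    simp
  have : (ae (volume.restrict S)).NeBot := ae_neBot.mpr hne
  obtain ⟨x, hxS, hx3, hxden⟩ := (hmem.and (h3'.and hden)).exists
  obtain ⟨hfx, hx0⟩ := hxS
  have hx0' : (0:ℝ) < x := hx0
  -- f vanishes a.e. on [a x, b x]
  have hT : volume ({r : ℝ | f (r * x) ≠ 0} ∩ Icc a b) = 0 := by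
    have hTm : MeasurableSet {r : ℝ | f (r * x) ≠ 0} :=
      ((hf.comp (measurable_id.mul_const x)) (measurableSet_singleton 0)).compl
    have hBm : MeasurableSet {r : ℝ | ¬ f x * f (r * x) = 0} := by
      have : Measurable fun r : ℝ => f x * f (r * x) :=
        measurable_const.mul (hf.comp (measurable_id.mul_const x))
      exact (this (measurableSet_singleton 0)).compl
    have h0 := hx3
    rw [ae_iff, Measure.restrict_apply hBm] at h0
    refine measure_mono_null ?_ h0
    intro r hr
    exact ⟨fun h => hr.1 ((mul_eq_zero.mp h).resolve_left hfx), hr.2⟩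
  have hkey : volume ({y : ℝ | f y ≠ 0} ∩ Icc (a * x) (b * x)) = 0 := by
    have hsub : {y : ℝ | f y ≠ 0} ∩ Icc (a * x) (b * x) ⊆
        (fun y => y * x⁻¹) ⁻¹' ({r : ℝ | f (r * x) ≠ 0} ∩ Icc a b) := by
      intro y hy
      have hyx : y * x⁻¹ * x = y := by field_simp
      constructor
      · show f (y * x⁻¹ * x) ≠ 0
        rw [hyx]; exact hy.1
      · constructor
        · show a ≤ y * x⁻¹
          rw [← div_eq_mul_inv, le_div_iff₀ hx0']
          exact hy.2.1
        · show y * x⁻¹ ≤ b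
          rw [← div_eq_mul_inv, div_le_iff₀ hx0']
          exact hy.2.2
    have hpre : volume ((fun y => y * x⁻¹) ⁻¹' ({r : ℝ | f (r * x) ≠ 0} ∩ Icc a b)) = 0 := by
      rw [Real.volume_preimage_mul_right (inv_ne_zero hx0'.ne') _, hT, mul_zero]
    exact measure_mono_null hsub hpre
  -- contradiction with density
  have hδ : 0 < min ((1 - a) * x) ((b - 1) * x) :=
    lt_min (mul_pos (by linarith) hx0') (mul_pos (by linarith) hx0')
  have hzero : ∀ᶠ ε in nhdsWithin (0:ℝ) (Ioi 0),
      volume (S ∩ Metric.closedBall x ε) / volume (Metric.closedBall x ε) = 0 := by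
    filter_upwards [Ioc_mem_nhdsGT_of_mem ⟨le_refl (0:ℝ), hδ⟩] with ε hε
    have hball : Metric.closedBall x ε ⊆ Icc (a * x) (b * x) := by
      rw [Real.closedBall_eq_Icc]
      apply Icc_subset_Icc
      · have := hε.2.trans (min_le_left _ _)
        nlinarith
      · have := hε.2.trans (min_le_right _ _)
        nlinarith
    have : volume (S ∩ Metric.closedBall x ε) = 0 := by
      refine measure_mono_null ?_ hkey
      exact fun y hy => ⟨hy.1.1, hball hy.2⟩
    rw [this, ENNReal.zero_div]
  have hlim : Filter.Tendsto (fun _ : ℝ => (0:ENNReal)) (nhdsWithin (0:ℝ) (Ioi 0)) (nhds 1) :=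
    hxden.congr' (by filter_upwards [hzero] with ε hε using hε)
  have : (1:ENNReal) = 0 := tendsto_nhds_unique hlim tendsto_const_nhds
  exact one_ne_zero this
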